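/- Suppose the family of vectors P_0(s) ∈ ℝ^N and P_j(s) ∈ ℝ^{N−j} (1 ≤ j ≤ N−1, s ∈ ℕ) satisfies the 1S first-step system. Define H_1 = I_{N−1} − (1−δ_{1,N−1})C_1(0) and, for 2 ≤ j ≤ N−1, H_j = I_{N−j} − (1−δ_{j,N−1})C_j(0) − C_{j−1}(1)·H_{j−1}^{−1}·C_j(2); assume each H_j (1 ≤ j ≤ N−1) is invertible. For s ∈ ℕ define h_1(s) = H_1^{−1}·(δ_{s,0}p_1 + (1−δ_{s,0})B_1·P_1(s−1) + C_0(1)·P_0(s)) and, for 2 ≤ j ≤ N−1, h_j(s) = H_j^{−1}·(δ_{s,0}p_j + (1−δ_{s,0})B_j·P_j(s−1) + C_{j−1}(1)·h_{j−1}(s)). Then for every s ∈ ℕ and every 1 ≤ j ≤ N−1: P_j(s) = h_j(s) + (1−δ_{j,N−1})·H_j^{−1}·C_{j+1}(2)·P_{j+1}(s). -/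
import Mathlib


open Matrix

noncomputable section

/-- The model parameters of the two-strain hospital-ward Markov chain. -/
structure ModelParams where
  β : ℝ
  μ : ℝ
  γ : ℝ
  τ1 : ℝ
  τ2 : ℝ
  m : ℝ
  c : ℝ

/-- Positivity/range conditions on the parameters. -/
def ModelParams.Valid (π : ModelParams) : Prop :=
  0 < π.β ∧ 0 < π.μ ∧ 0 < π.γ ∧ 0 < π.τ1 ∧ 0 < π.τ2 ∧
    π.m ∈ Set.Ioo (0:ℝ) 1 ∧ π.c ∈ Set.Ioo (0:ℝ) 1

/-- The total exit rate `q(i,j)` of state `(i,j)`. -/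
def qr (N : ℕ) (π : ModelParams) (i j : ℕ) : ℝ :=
  ((N : ℝ) - i) * (((i : ℝ) - j * π.c) * π.β + π.m * π.μ)
    + ((i : ℝ) - j) * (π.γ + π.τ1 + π.τ2 + (1 - π.m) * π.μ)
    + (j : ℝ) * (π.γ + π.τ2 + π.μ)

/-- The matrix `B_j` (Appendix A/B; `B_0` for `j = 0`), 0-based indexing: the 1-based
row index `i` corresponds to `k + 1` for `k : Fin (N - j)`. -/
def Bm (N : ℕ) (π : ModelParams) (j : ℕ) : Matrix (Fin (N - j)) (Fin (N - j)) ℝ :=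
  fun k l =>
    if (l : ℕ) = (k : ℕ) then π.m * π.μ / qr N π (j + (k : ℕ) + 1) j
    else if (l : ℕ) = (k : ℕ) + 1 then
      ((N : ℝ) - j - ((k : ℕ) + 1)) * π.β / qr N π (j + (k : ℕ) + 1) j
    else 0

/-- The matrix `C_j(0)` (Appendix A/B; `C_0(0)` for `j = 0`). -/
def Cm0 (N : ℕ) (π : ModelParams) (j : ℕ) : Matrix (Fin (N - j)) (Fin (N - j)) ℝ :=
  fun k l =>
    if (l : ℕ) + 1 = (k : ℕ) then
      ((k : ℕ) : ℝ) * (π.γ + π.τ1 + π.τ2 + (1 - π.m) * π.μ) / qr N π (j + (k : ℕ) + 1) j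
    else if (l : ℕ) = (k : ℕ) then
      (((N : ℝ) - j - ((k : ℕ) + 1)) * (1 - π.m) * π.μ + ((k : ℕ) : ℝ) * π.m * π.μ)
        / qr N π (j + (k : ℕ) + 1) j
    else if (l : ℕ) = (k : ℕ) + 1 then
      ((N : ℝ) - j - ((k : ℕ) + 1)) * (((k : ℕ) : ℝ) * π.β + π.m * π.μ)
        / qr N π (j + (k : ℕ) + 1) j
    else 0

/-- The matrix `C_{j-1}(1)` (Appendix B), of dimension `(N-j) × (N-(j-1))`. -/
def Cm1 (N : ℕ) (π : ModelParams) (j : ℕ) :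
    Matrix (Fin (N - j)) (Fin (N - (j - 1))) ℝ :=
  fun k l =>
    if (l : ℕ) = (k : ℕ) then
      (j : ℝ) * (π.γ + π.τ2 + (1 - π.m) * π.μ) / qr N π (j + (k : ℕ) + 1) j
    else if (l : ℕ) = (k : ℕ) + 1 then
      (j : ℝ) * π.m * π.μ / qr N π (j + (k : ℕ) + 1) j
    else 0

/-- The matrix `C_{j+1}(2)` (Appendix B), of dimension `(N-j) × (N-(j+1))`. -/
def Cm2 (N : ℕ) (π : ModelParams) (j : ℕ) :
    Matrix (Fin (N - j)) (Fin (N - (j + 1))) ℝ :=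
  fun k l =>
    if (l : ℕ) = (k : ℕ) then
      ((N : ℝ) - j - ((k : ℕ) + 1)) * j * (1 - π.c) * π.β / qr N π (j + (k : ℕ) + 1) j
    else 0

/-- The vector `p_{j,1_S}` (Appendix A/B). -/
def pS (N : ℕ) (π : ModelParams) (j : ℕ) : Fin (N - j) → ℝ :=
  fun k => (π.γ + π.τ1 + π.τ2 + (1 - π.m) * π.μ) / qr N π (j + (k : ℕ) + 1) j

/-- The matrix `E_j` (Appendix C), diagonal, of dimension `(N-j+1) × (N-(j-1))`;
the 1-based row index `k` corresponds to state `(j-1+k, j)`. -/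
def Em (N : ℕ) (π : ModelParams) (j : ℕ) :
    Matrix (Fin (N - j + 1)) (Fin (N - (j - 1))) ℝ :=
  fun k l =>
    if (l : ℕ) = (k : ℕ) then π.m * π.μ / qr N π (j + (k : ℕ)) j else 0

/-- The matrix `F_j` (Appendix C), of dimension `(N-j+1) × (N-j)`. -/
def Fm (N : ℕ) (π : ModelParams) (j : ℕ) :
    Matrix (Fin (N - j + 1)) (Fin (N - (j + 1) + 1)) ℝ :=
  fun k l =>
    if (l : ℕ) = (k : ℕ) then
      ((N : ℝ) - j - (k : ℕ)) * (1 - π.c) * π.β / qr N π (j + (k : ℕ)) j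
    else 0

/-- The matrix `D_j(0)` (Appendix C). -/
def Dm0 (N : ℕ) (π : ModelParams) (j : ℕ) :
    Matrix (Fin (N - j + 1)) (Fin (N - j + 1)) ℝ :=
  fun k l =>
    if (l : ℕ) + 1 = (k : ℕ) then
      ((k : ℕ) : ℝ) * (π.γ + π.τ1 + π.τ2 + (1 - π.m) * π.μ) / qr N π (j + (k : ℕ)) j
    else if (l : ℕ) = (k : ℕ) then
      (((N : ℝ) - j - (k : ℕ)) * (1 - π.m) * π.μ + ((k : ℕ) : ℝ) * π.m * π.μ)
        / qr N π (j + (k : ℕ)) j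
    else if (l : ℕ) = (k : ℕ) + 1 then
      ((N : ℝ) - j - (k : ℕ)) * (((k : ℕ) : ℝ) * π.β + π.m * π.μ) / qr N π (j + (k : ℕ)) j
    else 0

/-- The matrix `D_{j-1}(1)` (Appendix C), of dimension `(N-j+1) × (N-j+2)`. -/
def Dm1 (N : ℕ) (π : ModelParams) (j : ℕ) :
    Matrix (Fin (N - j + 1)) (Fin (N - (j - 1) + 1)) ℝ :=
  fun k l =>
    if (l : ℕ) = (k : ℕ) then
      ((j : ℝ) - 1) * (π.γ + π.τ2 + (1 - π.m) * π.μ) / qr N π (j + (k : ℕ)) j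
    else if (l : ℕ) = (k : ℕ) + 1 then
      ((j : ℝ) - 1) * π.m * π.μ / qr N π (j + (k : ℕ)) j
    else 0

/-- The matrix `D_{j+1}(2)` (Appendix C), of dimension `(N-j+1) × (N-j)`. -/
def Dm2 (N : ℕ) (π : ModelParams) (j : ℕ) :
    Matrix (Fin (N - j + 1)) (Fin (N - (j + 1) + 1)) ℝ :=
  fun k l =>
    if (l : ℕ) = (k : ℕ) then
      ((N : ℝ) - j - (k : ℕ)) * ((j : ℝ) - 1) * (1 - π.c) * π.β / qr N π (j + (k : ℕ)) j
    else 0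

/-- The vector `p_{j,1_R}` (Section 3.2). -/
def pR (N : ℕ) (π : ModelParams) (j : ℕ) : Fin (N - j + 1) → ℝ :=
  fun k => (π.γ + π.τ2 + (1 - π.m) * π.μ) / qr N π (j + (k : ℕ)) j

/-- The `1S` first-step system (equations (1)–(4) of the paper) for the family of
conditional-probability vectors `P j s = P_{j,1_S}(s)`, `0 ≤ j ≤ N−1`. -/
def OneSSystem (N : ℕ) (π : ModelParams)
    (P : (j : ℕ) → ℕ → Fin (N - j) → ℝ) : Prop :=
  IsUnit (1 - Cm0 N π 0) ∧
  (∀ s : ℕ, P 0 s = (1 - Cm0 N π 0)⁻¹.mulVec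
      (if s = 0 then pS N π 0 else (Bm N π 0).mulVec (P 0 (s - 1)))) ∧
  (∀ j s : ℕ, j + 1 ≤ N - 1 →
    P (j + 1) s
      = (if s = 0 then pS N π (j + 1) else (Bm N π (j + 1)).mulVec (P (j + 1) (s - 1)))
        + (Cm1 N π (j + 1)).mulVec (P j s)
        + (if j + 1 = N - 1 then 0 else
            (Cm0 N π (j + 1)).mulVec (P (j + 1) s)
              + (Cm2 N π (j + 1)).mulVec (P (j + 2) s)))

/-- The `(·,0)`-system (Theorem 2 of the paper) for the vectors
`PR j s = P_{j,1_R}(s,0)`, `1 ≤ j ≤ N`, coupled with a `1S` family `P`. -/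
def RZeroSystem (N : ℕ) (π : ModelParams)
    (P : (j : ℕ) → ℕ → Fin (N - j) → ℝ)
    (PR : (j : ℕ) → ℕ → Fin (N - j + 1) → ℝ) : Prop :=
  (∀ s : ℕ, PR 1 s = (Dm0 N π 1).mulVec (PR 1 s)
      + (if s = 0 then pR N π 1 else (Em N π 1).mulVec (P 0 (s - 1)))) ∧
  (∀ j s : ℕ, 1 ≤ j → j + 1 ≤ N →
    PR (j + 1) s
      = (if s = 0 then pR N π (j + 1) else (Em N π (j + 1)).mulVec (P j (s - 1)))
        + (Dm1 N π (j + 1)).mulVec (PR j s)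
        + (if j + 1 = N then 0 else
            (Dm0 N π (j + 1)).mulVec (PR (j + 1) s)
              + (Dm2 N π (j + 1)).mulVec (PR (j + 2) s)))

/-- The `(·,r)`-system for `r ≥ 1` (Theorem 3 of the paper) for the vectors
`PR j s r = P_{j,1_R}(s,r)`, `1 ≤ j ≤ N`. -/
def RPosSystem (N : ℕ) (π : ModelParams)
    (PR : (j : ℕ) → ℕ → ℕ → Fin (N - j + 1) → ℝ) : Prop :=
  (∀ s r : ℕ, PR 1 s (r + 1) = (Dm0 N π 1).mulVec (PR 1 s (r + 1))
      + (Fm N π 1).mulVec (PR 2 s r)) ∧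
  (∀ j s r : ℕ, 1 ≤ j → j + 1 ≤ N →
    PR (j + 1) s (r + 1)
      = (if j + 1 = N then 0 else (Fm N π (j + 1)).mulVec (PR (j + 2) s r))
        + (Dm1 N π (j + 1)).mulVec (PR j s (r + 1))
        + (if j + 1 = N then 0 else
            (Dm0 N π (j + 1)).mulVec (PR (j + 1) s (r + 1))
              + (Dm2 N π (j + 1)).mulVec (PR (j + 2) s (r + 1))))

private lemma inv_mulVec_eq' {n : Type*} [Fintype n] [DecidableEq n]
    {A : Matrix n n ℝ} (h : IsUnit A) {x y : n → ℝ}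
    (hxy : A.mulVec x = y) : x = A⁻¹.mulVec y := by
  have hd := (Matrix.isUnit_iff_isUnit_det A).mp h
  calc x = (A⁻¹ * A).mulVec x := by
        rw [Matrix.nonsing_inv_mul A hd, Matrix.one_mulVec]
    _ = A⁻¹.mulVec y := by rw [← Matrix.mulVec_mulVec, hxy]

/-- **Theorem 1 of the paper.** Block-Gaussian elimination solution of the
`1S` first-step system: with `H_1 = I − (1−δ_{1,N−1})C_1(0)`,
`H_j = I − (1−δ_{j,N−1})C_j(0) − C_{j−1}(1) H_{j−1}⁻¹ C_j(2)` all invertible, and the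
vectors `h_j(s)` defined by the forward recursion, one has
`P_j(s) = h_j(s) + (1−δ_{j,N−1}) H_j⁻¹ C_{j+1}(2) P_{j+1}(s)` for `1 ≤ j ≤ N−1`. -/
theorem oneS_block_elimination
    (N : ℕ) (hN : 2 ≤ N) (π : ModelParams) (hπ : π.Valid)
    (P : (j : ℕ) → ℕ → Fin (N - j) → ℝ)
    (hP : OneSSystem N π P)
    (H : (j : ℕ) → Matrix (Fin (N - j)) (Fin (N - j)) ℝ)
    (hH1 : H 1 = 1 - (if 1 = N - 1 then 0 else Cm0 N π 1))
    (hHrec : ∀ j : ℕ, 1 ≤ j → j + 1 ≤ N - 1 →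
      H (j + 1) = 1 - (if j + 1 = N - 1 then 0 else Cm0 N π (j + 1))
        - (show Matrix (Fin (N - (j + 1))) (Fin (N - j)) ℝ from Cm1 N π (j + 1))
            * (H j)⁻¹ * Cm2 N π j)
    (hHinv : ∀ j : ℕ, 1 ≤ j → j ≤ N - 1 → IsUnit (H j))
    (hv : (j : ℕ) → ℕ → Fin (N - j) → ℝ)
    (hv1 : ∀ s : ℕ, hv 1 s = (H 1)⁻¹.mulVec
      ((if s = 0 then pS N π 1 else (Bm N π 1).mulVec (P 1 (s - 1)))
        + (Cm1 N π 1).mulVec (P 0 s)))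
    (hvrec : ∀ j s : ℕ, 1 ≤ j → j + 1 ≤ N - 1 →
      hv (j + 1) s = (H (j + 1))⁻¹.mulVec
        ((if s = 0 then pS N π (j + 1) else (Bm N π (j + 1)).mulVec (P (j + 1) (s - 1)))
          + (Cm1 N π (j + 1)).mulVec (hv j s))) :
    ∀ s j : ℕ, 1 ≤ j → j ≤ N - 1 →
      P j s = hv j s
        + (if j = N - 1 then 0 else ((H j)⁻¹ * Cm2 N π j).mulVec (P (j + 1) s)) := by
  intro s j hj1 hjN
  induction j, hj1 using Nat.le_induction with
  | base =>
    have E := hP.2.2 0 s (by simpa using hjN)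
    simp only [Nat.zero_add] at E
    by_cases hc : 1 = N - 1
    · rw [if_pos hc] at E ⊢
      rw [hv1 s, hH1, if_pos hc, sub_zero, inv_one, Matrix.one_mulVec]
      simpa using E
    · rw [if_neg hc] at E ⊢
      have hU := hHinv 1 le_rfl hjN
      have key : (H 1).mulVec (P 1 s)
          = ((if s = 0 then pS N π 1 else (Bm N π 1).mulVec (P 1 (s - 1)))
              + (Cm1 N π 1).mulVec (P 0 s))
            + (Cm2 N π 1).mulVec (P 2 s) := by
        rw [hH1, if_neg hc, Matrix.sub_mulVec, Matrix.one_mulVec]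
        nth_rewrite 1 [E]; abel
      have := inv_mulVec_eq' hU key
      rw [this, Matrix.mulVec_add, hv1 s, Matrix.mulVec_mulVec]
  | succ j hj IH =>
    have hjle : j ≤ N - 1 := le_of_lt (lt_of_lt_of_le (Nat.lt_succ_self j) hjN)
    have hjne : j ≠ N - 1 := by omega
    have IH' := IH hjle
    rw [if_neg hjne] at IH'
    have E := hP.2.2 j s hjN
    have hU := hHinv (j + 1) (by omega) hjN
    have hHr := hHrec j hj hjN
    by_cases hc : j + 1 = N - 1
    · rw [if_pos hc] at E ⊢
      have key : (H (j + 1)).mulVec (P (j + 1) s)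
          = (if s = 0 then pS N π (j + 1)
              else (Bm N π (j + 1)).mulVec (P (j + 1) (s - 1)))
            + (Cm1 N π (j + 1)).mulVec (hv j s) := by
        rw [hHr, if_pos hc, sub_zero, Matrix.sub_mulVec, Matrix.one_mulVec]
        nth_rewrite 1 [E]
        rw [IH']
        simp only [Matrix.mulVec_add, add_zero, ← Matrix.mulVec_mulVec]
        abel
      have := inv_mulVec_eq' hU key
      rw [this, ← hvrec j s hj hjN, add_zero]
    · rw [if_neg hc] at E ⊢
      have key : (H (j + 1)).mulVec (P (j + 1) s)
          = ((if s = 0 then pS N π (j + 1)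
              else (Bm N π (j + 1)).mulVec (P (j + 1) (s - 1)))
            + (Cm1 N π (j + 1)).mulVec (hv j s))
            + (Cm2 N π (j + 1)).mulVec (P (j + 2) s) := by
        rw [hHr, if_neg hc, Matrix.sub_mulVec, Matrix.sub_mulVec, Matrix.one_mulVec]
        nth_rewrite 1 [E]
        rw [IH']
        simp only [Matrix.mulVec_add, ← Matrix.mulVec_mulVec]
        abel
      have := inv_mulVec_eq' hU key
      rw [this, Matrix.mulVec_add, ← hvrec j s hj hjN, Matrix.mulVec_mulVec]
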